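/- For every real number θ with 0 < θ < π, Л(θ) = θ·(1 - log(2θ) + ∑_{n=1}^∞ |B_{2n}|·(2θ)^(2n) / (2n·(2n+1)!)), where B_{2n} denotes the 2n-th Bernoulli number; in particular the series on the right converges. -/

import Mathlib

/-- The Lobachevsky function `Л(θ) = ∫₀^θ -log |2 sin t| dt`. -/
noncomputable def lobachevsky (θ : ℝ) : ℝ := ∫ t in (0 : ℝ)..θ, -Real.log |2 * Real.sin t|
open Real MeasureTheory Filter Topology
set_option maxHeartbeats 1000000

-- Step 1-3: sum of logs of Euler factors
lemma hasSum_log_factors (t : ℝ) (h0 : 0 < t) (hπ : t < π) :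
    HasSum (fun j : ℕ => -Real.log (1 - (t/π)^2/((j:ℝ)+1)^2))
      (Real.log t - Real.log (Real.sin t)) := by
  have hπ0 : (0:ℝ) < π := pi_pos
  set x : ℝ := t / π with hx
  have hx0 : 0 < x := div_pos h0 hπ0
  have hx1 : x < 1 := (div_lt_one hπ0).2 hπ
  have hxt : π * x = t := by rw [hx]; field_simp
  have hfac : ∀ j : ℕ, 0 < 1 - x^2/((j:ℝ)+1)^2 := by
    intro j
    have h1 : x^2 < 1 := by nlinarith
    have h2 : (1:ℝ) ≤ ((j:ℝ)+1)^2 := by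
      have : (1:ℝ) ≤ (j:ℝ)+1 := by
        have := Nat.cast_nonneg (α:=ℝ) j
        linarith
      nlinarith
    have : x^2/((j:ℝ)+1)^2 < 1 := by
      rw [div_lt_one (by positivity)]
      linarith
    linarith
  have hsin : 0 < Real.sin t := Real.sin_pos_of_pos_of_lt_pi h0 hπ
  -- product tendsto
  have hprod := Real.tendsto_euler_sin_prod x
  rw [hxt] at hprod
  have hP : Tendsto (fun n : ℕ => ∏ j ∈ Finset.range n, ((1:ℝ) - x^2/((j:ℝ)+1)^2))
      atTop (𝓝 (Real.sin t / t)) := by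
    have := hprod.div_const t
    refine this.congr fun n => ?_
    rw [mul_div_assoc, mul_comm, div_mul_cancel₀ _ h0.ne']
  have hlim : 0 < Real.sin t / t := div_pos hsin h0
  have hlog : Tendsto (fun n : ℕ => ∑ j ∈ Finset.range n, Real.log (1 - x^2/((j:ℝ)+1)^2))
      atTop (𝓝 (Real.log (Real.sin t / t))) := by
    have hc : ContinuousAt Real.log (Real.sin t / t) := Real.continuousAt_log hlim.ne'
    have := hc.tendsto.comp hP
    refine this.congr fun n => ?_
    rw [Function.comp_apply, Real.log_prod]
    exact fun j _ => (hfac j).ne'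
  rw [hasSum_iff_tendsto_nat_of_nonneg]
  · have : Real.log t - Real.log (Real.sin t) = -Real.log (Real.sin t / t) := by
      rw [Real.log_div hsin.ne' h0.ne']; ring
    rw [this]
    simpa using hlog.neg
  · intro j
    simp only [neg_nonneg]
    have : (0:ℝ) ≤ x^2/((j:ℝ)+1)^2 := by positivity
    exact Real.log_nonpos (by linarith [hfac j]) (by linarith)

-- shifted zeta sum
lemma hasSum_zeta_shift {k : ℕ} (hk : k ≠ 0) :
    HasSum (fun j : ℕ => 1 / ((j:ℝ)+1) ^ (2 * k))
      ((-1 : ℝ) ^ (k + 1) * (2 : ℝ) ^ (2 * k - 1) * π ^ (2 * k) *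
        ((bernoulli (2 * k) : ℚ) : ℝ) / (Nat.factorial (2 * k) : ℝ)) := by
  have h := hasSum_zeta_nat (k := k) hk
  have h2 := (hasSum_nat_add_iff' (f := fun n : ℕ => 1 / (n:ℝ) ^ (2*k)) 1).2 h
  simp only [Finset.range_one, Finset.sum_singleton, Nat.cast_zero,
    zero_pow (by omega : 2*k ≠ 0), div_zero, sub_zero, Nat.cast_add, Nat.cast_one] at h2
  convert h2 using 2


lemma abs_bernoulli_even {k : ℕ} (hk : k ≠ 0) :
    |((bernoulli (2 * k) : ℚ) : ℝ)| = (-1:ℝ)^(k+1) * ((bernoulli (2 * k) : ℚ) : ℝ) := by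
  set B : ℝ := ((bernoulli (2 * k) : ℚ) : ℝ)
  have h := hasSum_zeta_shift (k := k) hk
  have h1 : (1:ℝ) ≤ (-1 : ℝ) ^ (k + 1) * (2 : ℝ) ^ (2 * k - 1) * π ^ (2 * k) * B /
      (Nat.factorial (2 * k) : ℝ) := by
    have := le_hasSum h 0 (fun j _ => by positivity)
    simpa using this
  have hC : (0:ℝ) < (2 : ℝ) ^ (2 * k - 1) * π ^ (2 * k) / (Nat.factorial (2 * k) : ℝ) := by
    positivity
  have hpos : 0 < (-1:ℝ)^(k+1) * B := by
    have h2 : (0:ℝ) < ((-1:ℝ)^(k+1) * B) * ((2 : ℝ) ^ (2 * k - 1) * π ^ (2 * k) /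
        (Nat.factorial (2 * k) : ℝ)) := by
      have : ((-1:ℝ)^(k+1) * B) * ((2 : ℝ) ^ (2 * k - 1) * π ^ (2 * k) /
          (Nat.factorial (2 * k) : ℝ)) = (-1:ℝ) ^ (k + 1) * (2:ℝ) ^ (2 * k - 1) * π ^ (2 * k) * B /
          (Nat.factorial (2 * k) : ℝ) := by ring
      rw [this]; linarith
    by_contra hle
    push_neg at hle
    nlinarith
  calc |B| = |(-1:ℝ)^(k+1)| * |B| := by rw [abs_pow, abs_neg, abs_one, one_pow, one_mul]
  _ = |(-1:ℝ)^(k+1) * B| := (abs_mul _ _).symm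
  _ = (-1:ℝ)^(k+1) * B := abs_of_pos hpos

lemma hasSum_log_sin_series (t : ℝ) (h0 : 0 < t) (hπ : t < π) :
    HasSum (fun m : ℕ => |((bernoulli (2 * (m + 1)) : ℚ) : ℝ)| * (2 * t) ^ (2 * (m + 1)) /
        ((2 * ((m : ℝ) + 1)) * (Nat.factorial (2 * (m + 1)) : ℝ)))
      (Real.log t - Real.log (Real.sin t)) := by
  have hπ0 : (0:ℝ) < π := pi_pos
  set x : ℝ := t / π with hx
  have hx0 : 0 < x := div_pos h0 hπ0
  have hx1 : x < 1 := (div_lt_one hπ0).2 hπ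
  have hxt : π * x = t := by rw [hx]; field_simp
  set y : ℕ → ℝ := fun j => x^2 / ((j:ℝ)+1)^2 with hy
  have hy0 : ∀ j, 0 < y j := fun j => by positivity
  have hy1 : ∀ j, y j < 1 := by
    intro j
    have h1 : x^2 < 1 := by nlinarith
    have h2 : (1:ℝ) ≤ ((j:ℝ)+1)^2 := by
      have := Nat.cast_nonneg (α:=ℝ) j
      nlinarith
    rw [hy, div_lt_one (by positivity)]
    linarith
  set F : ℕ × ℕ → ℝ := fun p => (y p.1) ^ (p.2 + 1) / ((p.2:ℝ) + 1) with hF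
  have hFnn : 0 ≤ F := fun p => by
    have := (hy0 p.1).le
    positivity
  have hj : ∀ j : ℕ, HasSum (fun m => F (j, m)) (-Real.log (1 - y j)) := by
    intro j
    have : |y j| < 1 := by rw [abs_of_pos (hy0 j)]; exact hy1 j
    exact Real.hasSum_pow_div_log_of_abs_lt_one this
  have hO : HasSum (fun j : ℕ => -Real.log (1 - y j)) (Real.log t - Real.log (Real.sin t)) :=
    hasSum_log_factors t h0 hπ
  have hFs : Summable F := by
    rw [summable_prod_of_nonneg hFnn]
    refine ⟨fun j => (hj j).summable, ?_⟩
    exact hO.summable.congr fun j => ((hj j).tsum_eq).symm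
  have htsum : ∑' p, F p = Real.log t - Real.log (Real.sin t) := by
    rw [Summable.tsum_prod hFs, ← hO.tsum_eq]
    exact tsum_congr fun j => (hj j).tsum_eq
  have hFs' : Summable (Function.uncurry fun j m => F (j, m)) := hFs
  have hFsw : Summable (fun p : ℕ × ℕ => F p.swap) := hFs.prod_symm
  have hsw : ∀ p : ℕ × ℕ, 0 ≤ F p.swap := fun p => hFnn p.swap
  obtain ⟨hcol, hrow⟩ := (summable_prod_of_nonneg (f := fun p : ℕ × ℕ => F p.swap) hsw).1 hFsw
  have htsum2 : ∑' (m : ℕ) (j : ℕ), F (j, m) = Real.log t - Real.log (Real.sin t) := by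
    rw [Summable.tsum_comm hFs', ← htsum, Summable.tsum_prod hFs]
  -- inner sums
  have hinner : ∀ m : ℕ, HasSum (fun j => F (j, m))
      (|((bernoulli (2 * (m + 1)) : ℚ) : ℝ)| * (2 * t) ^ (2 * (m + 1)) /
        ((2 * ((m : ℝ) + 1)) * (Nat.factorial (2 * (m + 1)) : ℝ))) := by
    intro m
    have hz := (hasSum_zeta_shift (k := m + 1) (Nat.succ_ne_zero m)).mul_left
      (x ^ (2 * (m + 1)) / ((m:ℝ) + 1))
    have heq : ∀ j : ℕ, F (j, m) =
        (x ^ (2 * (m + 1)) / ((m:ℝ) + 1)) * (1 / ((j:ℝ)+1) ^ (2 * (m + 1))) := by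
      intro j
      show (x ^ 2 / ((j:ℝ)+1) ^ 2) ^ (m + 1) / ((m:ℝ) + 1) = _
      rw [div_pow, ← pow_mul, ← pow_mul]
      ring
    have hval : (x ^ (2 * (m + 1)) / ((m:ℝ) + 1)) *
        ((-1 : ℝ) ^ (m + 1 + 1) * (2 : ℝ) ^ (2 * (m + 1) - 1) * π ^ (2 * (m + 1)) *
          ((bernoulli (2 * (m + 1)) : ℚ) : ℝ) / (Nat.factorial (2 * (m + 1)) : ℝ)) =
        |((bernoulli (2 * (m + 1)) : ℚ) : ℝ)| * (2 * t) ^ (2 * (m + 1)) /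
          ((2 * ((m : ℝ) + 1)) * (Nat.factorial (2 * (m + 1)) : ℝ)) := by
      rw [abs_bernoulli_even (Nat.succ_ne_zero m)]
      have h2 : (2:ℝ) ^ (2 * (m + 1) - 1) = (2:ℝ) ^ (2 * (m + 1)) / 2 := by
        have he : 2 * (m + 1) - 1 + 1 = 2 * (m + 1) := by omega
        rw [eq_div_iff (two_ne_zero' ℝ), ← pow_succ, he]
      have ht : (2 * t) ^ (2 * (m + 1)) = 2 ^ (2 * (m + 1)) * (π ^ (2 * (m + 1)) * x ^ (2 * (m + 1))) := by
        rw [← hxt, ← mul_pow, ← mul_pow]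
      rw [h2, ht]
      have hfac0 : (Nat.factorial (2 * (m + 1)) : ℝ) ≠ 0 := by positivity
      have hm0 : ((m:ℝ) + 1) ≠ 0 := by positivity
      field_simp
    rw [← hval]
    exact hz.congr_fun heq
  -- conclude
  have hsum_row : Summable (fun m : ℕ =>
      |((bernoulli (2 * (m + 1)) : ℚ) : ℝ)| * (2 * t) ^ (2 * (m + 1)) /
        ((2 * ((m : ℝ) + 1)) * (Nat.factorial (2 * (m + 1)) : ℝ))) :=
    hrow.congr fun m => by
    rw [show (fun j => F (m, j).swap) = fun j => F (j, m) from rfl] at *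
    exact ((hinner m).tsum_eq)
  have hts : ∑' m : ℕ, |((bernoulli (2 * (m + 1)) : ℚ) : ℝ)| * (2 * t) ^ (2 * (m + 1)) /
      ((2 * ((m : ℝ) + 1)) * (Nat.factorial (2 * (m + 1)) : ℝ)) =
      Real.log t - Real.log (Real.sin t) := by
    rw [← htsum2]
    exact tsum_congr fun m => ((hinner m).tsum_eq).symm
  rw [← hts]
  exact hsum_row.hasSum

lemma integrableOn_log_Ioc {θ : ℝ} (h0 : 0 < θ) : IntegrableOn Real.log (Set.Ioc 0 θ) volume := by
  have hbd : IntegrableOn (fun s : ℝ => 2 * s ^ (-(1/2) : ℝ) + |Real.log θ|) (Set.Ioc 0 θ) volume := by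
    have h1 : IntervalIntegrable (fun s : ℝ => s ^ (-(1/2) : ℝ)) volume 0 θ :=
      intervalIntegral.intervalIntegrable_rpow' (by norm_num)
    have h2 := (h1.const_mul 2).add (intervalIntegrable_const (c := |Real.log θ|))
    exact (intervalIntegrable_iff_integrableOn_Ioc_of_le h0.le).1 h2
  refine hbd.mono' Real.measurable_log.aestronglyMeasurable ?_
  rw [MeasureTheory.ae_restrict_iff' measurableSet_Ioc]
  filter_upwards with s hs
  have hs0 : 0 < s := hs.1
  have hr0 : (0:ℝ) ≤ s ^ (-(1/2) : ℝ) := Real.rpow_nonneg hs0.le _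
  rw [Real.norm_eq_abs, abs_le]
  constructor
  · -- -(2 s^{-1/2} + |log θ|) ≤ log s, i.e. -log s ≤ 2 s^{-1/2} + |log θ|
    have hlog : Real.log (s ^ (-(1/2) : ℝ)) ≤ s ^ (-(1/2) : ℝ) - 1 :=
      Real.log_le_sub_one_of_pos (Real.rpow_pos_of_pos hs0 _)
    rw [Real.log_rpow hs0] at hlog
    have : -Real.log s ≤ 2 * s ^ (-(1/2) : ℝ) := by nlinarith
    have := abs_nonneg (Real.log θ)
    linarith
  · have : Real.log s ≤ Real.log θ := Real.log_le_log hs0 hs.2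
    have := le_abs_self (Real.log θ)
    linarith

lemma integrableOn_neg_log_two_mul {θ : ℝ} (h0 : 0 < θ) :
    IntegrableOn (fun s : ℝ => -Real.log (2 * s)) (Set.Ioc 0 θ) volume := by
  have h1 : IntegrableOn (fun s : ℝ => -(Real.log 2 + Real.log s)) (Set.Ioc 0 θ) volume :=
    ((integrable_const (Real.log 2)).add (integrableOn_log_Ioc h0)).neg
  refine h1.congr ?_
  rw [Filter.eventuallyEq_iff_exists_mem]
  refine ⟨Set.Ioc 0 θ, MeasureTheory.self_mem_ae_restrict measurableSet_Ioc, fun s hs => ?_⟩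
  simp only
  rw [Real.log_mul two_ne_zero hs.1.ne']

lemma integral_neg_log_two_mul {θ : ℝ} (h0 : 0 < θ) :
    ∫ s in (0:ℝ)..θ, -Real.log (2 * s) = θ * (1 - Real.log (2 * θ)) := by
  have hint : IntervalIntegrable (fun s : ℝ => -Real.log (2 * s)) volume 0 θ :=
    (intervalIntegrable_iff_integrableOn_Ioc_of_le h0.le).2 (integrableOn_neg_log_two_mul h0)
  have hderiv : ∀ s ∈ Set.Ioo (0:ℝ) θ, HasDerivAt (fun s : ℝ => s - s * Real.log (2 * s))
      (-Real.log (2 * s)) s := by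
    intro s hs
    have hs0 : (0:ℝ) < s := hs.1
    have h1 : HasDerivAt (fun s : ℝ => 2 * s) 2 s := by
      simpa using (hasDerivAt_id s).const_mul 2
    have h2 : HasDerivAt (fun s : ℝ => Real.log (2 * s)) (1/s) s := by
      have := (Real.hasDerivAt_log (by positivity : (2:ℝ) * s ≠ 0)).comp s h1
      exact this.congr_deriv (by field_simp)
    have h3 : HasDerivAt (fun s : ℝ => s * Real.log (2 * s))
        (1 * Real.log (2 * s) + s * (1/s)) s := (hasDerivAt_id s).mul h2
    have h4 := (hasDerivAt_id s).sub h3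
    exact h4.congr_deriv (by rw [one_div, mul_inv_cancel₀ hs0.ne']; ring)
  have ha : Filter.Tendsto (fun s : ℝ => s - s * Real.log (2 * s)) (nhdsWithin 0 (Set.Ioi 0))
      (nhds 0) := by
    have hc : Filter.Tendsto (fun s : ℝ => s - s * Real.log 2 - s * Real.log s)
        (nhdsWithin 0 (Set.Ioi 0)) (nhds 0) := by
      have h1 : Filter.Tendsto (fun s : ℝ => s - s * Real.log 2 - s * Real.log s)
          (nhds 0) (nhds (0 - 0 * Real.log 2 - 0 * Real.log 0)) := by
        exact ((continuous_id.sub (continuous_id.mul continuous_const)).sub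
          Real.continuous_mul_log).tendsto 0
      simp only [zero_mul, sub_zero, zero_sub, neg_zero] at h1
      exact h1.mono_left nhdsWithin_le_nhds
    refine hc.congr' ?_
    filter_upwards [self_mem_nhdsWithin] with s (hs : 0 < s)
    rw [Real.log_mul two_ne_zero hs.ne']
    ring
  have hb : Filter.Tendsto (fun s : ℝ => s - s * Real.log (2 * s)) (nhdsWithin θ (Set.Iio θ))
      (nhds (θ - θ * Real.log (2 * θ))) := by
    have : ContinuousAt (fun s : ℝ => s - s * Real.log (2 * s)) θ := by
      have : ContinuousAt (fun s : ℝ => Real.log (2 * s)) θ :=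
        (Real.continuousAt_log (by positivity)).comp (by fun_prop)
      exact (continuousAt_id.sub (continuousAt_id.mul this))
    exact this.tendsto.mono_left nhdsWithin_le_nhds
  rw [intervalIntegral.integral_eq_sub_of_hasDerivAt_of_tendsto h0 hderiv hint ha hb]
  ring

-- abbreviations for the two term families
noncomputable def termB (θ : ℝ) (n : ℕ) : ℝ :=
  |((bernoulli (2 * (n + 1)) : ℚ) : ℝ)| * (2 * θ) ^ (2 * (n + 1)) /
    ((2 * ((n : ℝ) + 1)) * (Nat.factorial (2 * (n + 1)) : ℝ))

noncomputable def termC (θ : ℝ) (n : ℕ) : ℝ :=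
  |((bernoulli (2 * (n + 1)) : ℚ) : ℝ)| * (2 * θ) ^ (2 * (n + 1)) /
    ((2 * ((n : ℝ) + 1)) * (Nat.factorial (2 * (n + 1) + 1) : ℝ))

lemma termB_nonneg (θ : ℝ) (n : ℕ) : 0 ≤ termB θ n := by
  unfold termB
  have h1 : (0:ℝ) ≤ (2 * θ) ^ (2 * (n + 1)) := even_two_mul (n+1) |>.pow_nonneg _
  positivity

lemma termC_nonneg (θ : ℝ) (n : ℕ) : 0 ≤ termC θ n := by
  unfold termC
  have h1 : (0:ℝ) ≤ (2 * θ) ^ (2 * (n + 1)) := even_two_mul (n+1) |>.pow_nonneg _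
  positivity

lemma termC_le_termB (θ : ℝ) (n : ℕ) : termC θ n ≤ termB θ n := by
  unfold termB termC
  have h1 : (0:ℝ) ≤ |((bernoulli (2 * (n + 1)) : ℚ) : ℝ)| * (2 * θ) ^ (2 * (n + 1)) := by
    have := even_two_mul (n+1) |>.pow_nonneg (2*θ)
    positivity
  refine div_le_div_of_nonneg_left h1 (by positivity) ?_
  have hf : (Nat.factorial (2 * (n + 1)) : ℝ) ≤ (Nat.factorial (2 * (n + 1) + 1) : ℝ) := by
    exact_mod_cast Nat.factorial_le (Nat.le_succ _)
  have h2 : (0:ℝ) ≤ 2 * ((n : ℝ) + 1) := by positivity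
  exact mul_le_mul_of_nonneg_left hf h2

lemma summable_termC {θ : ℝ} (h0 : 0 < θ) (hπ : θ < π) : Summable (termC θ) := by
  have hB : Summable (termB θ) := (hasSum_log_sin_series θ h0 hπ).summable
  exact hB.of_nonneg_of_le (termC_nonneg θ) (termC_le_termB θ)

lemma termB_continuous (n : ℕ) : Continuous (fun s : ℝ => termB s n) := by
  unfold termB
  fun_prop

lemma termB_mono {s θ : ℝ} (hs : 0 ≤ s) (hsθ : s ≤ θ) (n : ℕ) : termB s n ≤ termB θ n := by
  unfold termB
  have h1 : (2 * s) ^ (2 * (n + 1)) ≤ (2 * θ) ^ (2 * (n + 1)) :=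
    pow_le_pow_left₀ (by linarith) (by linarith) _
  have h2 : (0:ℝ) ≤ |((bernoulli (2 * (n + 1)) : ℚ) : ℝ)| := abs_nonneg _
  have h3 : (0:ℝ) < (2 * ((n : ℝ) + 1)) * (Nat.factorial (2 * (n + 1)) : ℝ) := by positivity
  exact div_le_div_of_nonneg_right (by nlinarith) h3.le

lemma integral_termB {θ : ℝ} (h0 : 0 < θ) (n : ℕ) :
    ∫ s in Set.Ioc (0:ℝ) θ, termB s n = θ * termC θ n := by
  rw [← intervalIntegral.integral_of_le h0.le]
  set C : ℝ := |((bernoulli (2 * (n + 1)) : ℚ) : ℝ)| * 2 ^ (2 * (n + 1)) /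
    ((2 * ((n : ℝ) + 1)) * (Nat.factorial (2 * (n + 1)) : ℝ)) with hC
  have hterm : ∀ s : ℝ, termB s n = C * s ^ (2 * (n + 1)) := by
    intro s
    rw [hC]
    unfold termB
    rw [mul_pow]
    ring
  simp_rw [hterm]
  rw [intervalIntegral.integral_const_mul, integral_pow]
  rw [hC]
  unfold termC
  rw [zero_pow (by omega : 2 * (n + 1) + 1 ≠ 0), Nat.factorial_succ]
  have h1 : ((n:ℝ) + 1) ≠ 0 := by positivity
  have h2 : (Nat.factorial (2 * (n + 1)) : ℝ) ≠ 0 := by positivity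
  have h3 : ((2 * (n + 1) : ℕ) : ℝ) + 1 ≠ 0 := by positivity
  push_cast
  field_simp
  ring

lemma G_integrableOn {θ : ℝ} (h0 : 0 < θ) (hπ : θ < π) :
    IntegrableOn (fun s : ℝ => Real.log s - Real.log (Real.sin s)) (Set.Ioc 0 θ) volume := by
  have hmeas : AEStronglyMeasurable (fun s : ℝ => Real.log s - Real.log (Real.sin s))
      (volume.restrict (Set.Ioc 0 θ)) :=
    ((Real.measurable_log.sub (Real.measurable_log.comp Real.measurable_sin))).aestronglyMeasurable
  have hGθ := hasSum_log_sin_series θ h0 hπ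
  refine (integrable_const (Real.log θ - Real.log (Real.sin θ))).mono' hmeas ?_
  rw [MeasureTheory.ae_restrict_iff' measurableSet_Ioc]
  filter_upwards with s hs
  have hs0 : 0 < s := hs.1
  have hsπ : s < π := lt_of_le_of_lt hs.2 hπ
  have hGs := hasSum_log_sin_series s hs0 hsπ
  have hnn : 0 ≤ Real.log s - Real.log (Real.sin s) :=
    hGs.nonneg (fun n => termB_nonneg s n)
  have hle : Real.log s - Real.log (Real.sin s) ≤ Real.log θ - Real.log (Real.sin θ) := by
    rw [← hGs.tsum_eq, ← hGθ.tsum_eq]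
    exact Summable.tsum_le_tsum (fun n => termB_mono hs0.le hs.2 n) hGs.summable hGθ.summable
  rw [Real.norm_eq_abs, abs_of_nonneg hnn]
  exact hle

lemma G_integral {θ : ℝ} (h0 : 0 < θ) (hπ : θ < π) :
    ∫ s in Set.Ioc (0:ℝ) θ, (Real.log s - Real.log (Real.sin s)) = θ * ∑' n, termC θ n := by
  have hcongr : ∀ s ∈ Set.Ioc (0:ℝ) θ,
      Real.log s - Real.log (Real.sin s) = ∑' n, termB s n := by
    intro s hs
    exact (hasSum_log_sin_series s hs.1 (lt_of_le_of_lt hs.2 hπ)).tsum_eq.symm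
  rw [MeasureTheory.setIntegral_congr_fun measurableSet_Ioc hcongr]
  have hint : ∀ n : ℕ, Integrable (fun s : ℝ => termB s n) (volume.restrict (Set.Ioc 0 θ)) :=
    fun n => (termB_continuous n).integrableOn_Ioc
  have hnorm : ∀ n : ℕ, ∫ s in Set.Ioc (0:ℝ) θ, ‖termB s n‖ = θ * termC θ n := by
    intro n
    rw [← integral_termB h0 n]
    refine MeasureTheory.setIntegral_congr_fun measurableSet_Ioc fun s _ => ?_
    rw [Real.norm_eq_abs, abs_of_nonneg (termB_nonneg s n)]
  have hsum : Summable (fun n => ∫ s in Set.Ioc (0:ℝ) θ, ‖termB s n‖) := by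
    simp_rw [hnorm]
    exact (summable_termC h0 hπ).mul_left θ
  rw [← MeasureTheory.integral_tsum_of_summable_integral_norm hint hsum]
  rw [← tsum_mul_left]
  exact tsum_congr fun n => by rw [integral_termB h0 n]




/-- For `0 < θ < π`,
`Л(θ) = θ * (1 - log (2θ) + ∑_{n=1}^∞ |B_{2n}| (2θ)^(2n) / (2n (2n+1)!))`,
the series being convergent. -/
theorem stmt5 (θ : ℝ) (h0 : 0 < θ) (hπ : θ < Real.pi) :
    Summable (fun n : ℕ =>
      |((bernoulli (2 * (n + 1)) : ℚ) : ℝ)| * (2 * θ) ^ (2 * (n + 1)) /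
        ((2 * ((n : ℝ) + 1)) * (Nat.factorial (2 * (n + 1) + 1) : ℝ))) ∧
    lobachevsky θ = θ * (1 - Real.log (2 * θ) +
      ∑' n : ℕ, |((bernoulli (2 * (n + 1)) : ℚ) : ℝ)| * (2 * θ) ^ (2 * (n + 1)) /
        ((2 * ((n : ℝ) + 1)) * (Nat.factorial (2 * (n + 1) + 1) : ℝ))) := by
  have hfun : (fun n : ℕ =>
      |((bernoulli (2 * (n + 1)) : ℚ) : ℝ)| * (2 * θ) ^ (2 * (n + 1)) /
        ((2 * ((n : ℝ) + 1)) * (Nat.factorial (2 * (n + 1) + 1) : ℝ))) = termC θ := rfl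
  rw [hfun]
  refine ⟨summable_termC h0 hπ, ?_⟩
  have h1 : IntervalIntegrable (fun s : ℝ => -Real.log (2 * s)) volume 0 θ :=
    (intervalIntegrable_iff_integrableOn_Ioc_of_le h0.le).2 (integrableOn_neg_log_two_mul h0)
  have h2 : IntervalIntegrable (fun s : ℝ => Real.log s - Real.log (Real.sin s)) volume 0 θ :=
    (intervalIntegrable_iff_integrableOn_Ioc_of_le h0.le).2 (G_integrableOn h0 hπ)
  have hcongr : ∫ t in (0:ℝ)..θ, -Real.log |2 * Real.sin t| =
      ∫ t in (0:ℝ)..θ, ((-Real.log (2 * t)) + (Real.log t - Real.log (Real.sin t))) := by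
    refine intervalIntegral.integral_congr_ae ?_
    filter_upwards with s hs
    rw [Set.uIoc_of_le h0.le] at hs
    have hs0 : 0 < s := hs.1
    have hsin : 0 < Real.sin s := Real.sin_pos_of_pos_of_lt_pi hs0 (lt_of_le_of_lt hs.2 hπ)
    rw [abs_of_pos (by linarith : (0:ℝ) < 2 * Real.sin s),
      Real.log_mul two_ne_zero hsin.ne', Real.log_mul two_ne_zero hs0.ne']
    ring
  rw [lobachevsky, hcongr, intervalIntegral.integral_add h1 h2, integral_neg_log_two_mul h0,
    intervalIntegral.integral_of_le h0.le, G_integral h0 hπ]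
  ring
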